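/- arXiv:2102.01965 — 4 statements merged into one kernel-verified Lean document; each statement's English description precedes it below -/
import Mathlib

section
/- Let {W_j}_{j∈J} be closed subspaces of H, {v_j}_{j∈J} a bounded family of positive weights with B = sup_j v_j², and Λ_j ∈ B(H, H_j). Suppose (I) there exists A > 0 such that Σ_{j∈J} ‖Λ_j P_{W_j} f‖² ≤ (1/A)‖f‖² for all f ∈ H, and (II) {v_j P_{W_j} Λ_j* Λ_j P_{W_j}}_{j∈J} is a resolution of the identity operator on H. Then Λ = {(W_j, Λ_j, v_j)} is a g-fusion frame for H with bounds A and B/A. -/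
open ContinuousLinearMap

noncomputable def proj {E : Type*} [NormedAddCommGroup E] [InnerProductSpace ℂ E]
    (W : Submodule ℂ E) [CompleteSpace W] : E →L[ℂ] E :=
  W.subtypeL.comp (W.orthogonalProjection)

/-- sufficient conditions for a g-fusion frame with bounds A and B/A, where
B = sup_j v_j². -/
theorem stmt4 {ι E : Type*} [NormedAddCommGroup E] [InnerProductSpace ℂ E] [CompleteSpace E]
    {G : ι → Type*} [∀ j, NormedAddCommGroup (G j)] [∀ j, InnerProductSpace ℂ (G j)]
    [∀ j, CompleteSpace (G j)]
    (W : ι → Submodule ℂ E) [∀ j, CompleteSpace (W j)]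
    (v : ι → ℝ) (hv : ∀ j, 0 < v j)
    (Λ : ∀ j, E →L[ℂ] G j)
    (A B : ℝ) (hA : 0 < A) (hB : ∀ j, (v j) ^ 2 ≤ B)
    (h1 : ∀ f : E, Summable (fun j => ‖Λ j (proj (W j) f)‖ ^ 2) ∧
      ∑' j, ‖Λ j (proj (W j) f)‖ ^ 2 ≤ 1 / A * ‖f‖ ^ 2)
    (h2 : ∀ f : E, HasSum
      (fun j => v j • proj (W j) (ContinuousLinearMap.adjoint (Λ j) (Λ j (proj (W j) f)))) f) :
    ∀ f : E,
      Summable (fun j => (v j) ^ 2 * ‖Λ j (proj (W j) f)‖ ^ 2) ∧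
      A * ‖f‖ ^ 2 ≤ ∑' j, (v j) ^ 2 * ‖Λ j (proj (W j) f)‖ ^ 2 ∧
      ∑' j, (v j) ^ 2 * ‖Λ j (proj (W j) f)‖ ^ 2 ≤ B / A * ‖f‖ ^ 2 := by
  intro f
  set x : ι → ℝ := fun j => ‖Λ j (proj (W j) f)‖ ^ 2 with hxdef
  have hx0 : ∀ j, 0 ≤ x j := fun j => sq_nonneg _
  obtain ⟨hT, hTle⟩ := h1 f
  -- key identity: ‖f‖² = ∑' j, v j * x j
  have hkey : HasSum (fun j => v j * x j) (‖f‖ ^ 2) := by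
    have h := (h2 f).mapL (innerSL ℂ f)
    have heq : (fun j => (innerSL ℂ f)
        (v j • proj (W j) ((ContinuousLinearMap.adjoint (Λ j)) (Λ j (proj (W j) f)))))
        = fun j => ((v j * x j : ℝ) : ℂ) := by
      funext j
      have hsm : (v j : ℝ) • proj (W j) ((ContinuousLinearMap.adjoint (Λ j)) (Λ j (proj (W j) f)))
          = ((v j : ℂ)) • proj (W j) ((ContinuousLinearMap.adjoint (Λ j)) (Λ j (proj (W j) f))) :=
        RCLike.real_smul_eq_coe_smul (K := ℂ) _ _
      simp only [innerSL_apply_apply, hsm, inner_smul_right]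
      have hproj : ∀ g : E, (inner ℂ f (_root_.proj (W j) g) : ℂ) = inner ℂ (_root_.proj (W j) f) g := by
        intro g
        exact ((W j).inner_starProjection_left_eq_right f g).symm
      rw [hproj, ContinuousLinearMap.adjoint_inner_right,
        inner_self_eq_norm_sq_to_K]
      simp only [hxdef]
      rw [Complex.ofReal_mul, Complex.ofReal_pow]
      rfl
    rw [heq] at h
    have hff : ((innerSL ℂ f) f : ℂ) = ((‖f‖ ^ 2 : ℝ) : ℂ) := by
      simp only [innerSL_apply_apply]
      rw [inner_self_eq_norm_sq_to_K]; norm_cast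
    rw [hff] at h
    exact Complex.hasSum_ofReal.mp h
  have hvx : Summable (fun j => v j * x j) := hkey.summable
  have hN : ∑' j, v j * x j = ‖f‖ ^ 2 := hkey.tsum_eq
  -- summability of v² x
  have hS : Summable (fun j => (v j) ^ 2 * x j) :=
    Summable.of_nonneg_of_le (fun j => mul_nonneg (sq_nonneg _) (hx0 j))
      (fun j => mul_le_mul_of_nonneg_right (hB j) (hx0 j)) (hT.mul_left B)
  have hSnn : 0 ≤ ∑' j, (v j) ^ 2 * x j :=
    tsum_nonneg fun j => mul_nonneg (sq_nonneg _) (hx0 j)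
  have hTnn : 0 ≤ ∑' j, x j := tsum_nonneg hx0
  refine ⟨hS, ?_, ?_⟩
  · -- lower bound
    rcases eq_or_ne f 0 with hf0 | hf0
    · subst hf0
      have hz : A * ‖(0 : E)‖ ^ 2 = 0 := by simp
      rw [hz]
      exact hSnn
    have hfpos : 0 < ‖f‖ ^ 2 := by
      have := norm_pos_iff.mpr hf0
      positivity
    -- Cauchy–Schwarz: (∑ v x)² ≤ (∑ v² x)(∑ x)
    have hCS : (‖f‖ ^ 2) ^ 2 ≤ (∑' j, (v j) ^ 2 * x j) * ∑' j, x j := by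
      have htend : Filter.Tendsto (fun s : Finset ι => (∑ j ∈ s, v j * x j) ^ 2)
          Filter.atTop (nhds ((‖f‖ ^ 2) ^ 2)) := hkey.pow 2
      refine le_of_tendsto' htend fun s => ?_
      have h1s : (∑ j ∈ s, v j * x j) ^ 2
          ≤ (∑ j ∈ s, (v j) ^ 2 * x j) * ∑ j ∈ s, x j := by
        have := Finset.sum_mul_sq_le_sq_mul_sq s (fun j => v j * Real.sqrt (x j))
          (fun j => Real.sqrt (x j))
        have hrw : ∀ j, v j * Real.sqrt (x j) * Real.sqrt (x j) = v j * x j := by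
          intro j
          rw [mul_assoc, Real.mul_self_sqrt (hx0 j)]
        have hrw2 : ∀ j, (v j * Real.sqrt (x j)) ^ 2 = (v j) ^ 2 * x j := by
          intro j
          rw [mul_pow, Real.sq_sqrt (hx0 j)]
        have hrw3 : ∀ j, (Real.sqrt (x j)) ^ 2 = x j := fun j => Real.sq_sqrt (hx0 j)
        simpa [hrw, hrw2, hrw3] using this
      refine h1s.trans (mul_le_mul ?_ ?_ ?_ hSnn)
      · exact Summable.sum_le_tsum s (fun j _ => mul_nonneg (sq_nonneg _) (hx0 j)) hS
      · exact Summable.sum_le_tsum s (fun j _ => hx0 j) hT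
      · exact Finset.sum_nonneg fun j _ => hx0 j
    have hTle' : ∑' j, x j ≤ 1 / A * ‖f‖ ^ 2 := hTle
    have h4 : (‖f‖ ^ 2) ^ 2 ≤ (∑' j, (v j) ^ 2 * x j) * (1 / A * ‖f‖ ^ 2) :=
      hCS.trans (mul_le_mul_of_nonneg_left hTle' hSnn)
    have h5 := mul_le_mul_of_nonneg_left h4 hA.le
    have h6 : A * ((∑' j, (v j) ^ 2 * x j) * (1 / A * ‖f‖ ^ 2))
        = (∑' j, (v j) ^ 2 * x j) * ‖f‖ ^ 2 := by field_simp
    rw [h6] at h5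
    have hmul : A * ‖f‖ ^ 2 * ‖f‖ ^ 2 ≤ (∑' j, (v j) ^ 2 * x j) * ‖f‖ ^ 2 := by nlinarith [h5]
    exact le_of_mul_le_mul_right hmul hfpos
  · -- upper bound
    rcases isEmpty_or_nonempty ι with h | hne
    · have hf : f = 0 := (h2 f).unique hasSum_empty
      simp [tsum_empty, hf]
    obtain ⟨j0⟩ := hne
    have hBpos : 0 ≤ B := le_trans (le_of_lt (pow_pos (hv j0) 2)) (hB j0)
    calc ∑' j, (v j) ^ 2 * x j
        ≤ ∑' j, B * x j := by
          refine Summable.tsum_le_tsum (fun j => mul_le_mul_of_nonneg_right (hB j) (hx0 j)) hS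
            (hT.mul_left B)
      _ = B * ∑' j, x j := tsum_mul_left
      _ ≤ B * (1 / A * ‖f‖ ^ 2) := mul_le_mul_of_nonneg_left hTle hBpos
      _ = B / A * ‖f‖ ^ 2 := by ring
end

section
/- Let Λ, Γ be g-fusion Bessel sequences in H with bounds D₁, D₂ and frame operator S_{ΓΛ}, and suppose S_{ΓΛ} is bounded below with ‖S_{ΓΛ} f‖ ≥ M‖f‖ for all f ∈ H. Then Λ is a g-fusion frame for H with lower bound M²/D₂ and upper bound D₁. -/
open ContinuousLinearMap

/-- if S_{ΓΛ} is bounded below by M, then Λ is a g-fusion frame with bounds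
M²/D₂ and D₁. -/
theorem stmt11
    {ι E : Type*} [NormedAddCommGroup E] [InnerProductSpace ℂ E] [CompleteSpace E]
    {G : ι → Type*} [∀ j, NormedAddCommGroup (G j)] [∀ j, InnerProductSpace ℂ (G j)]
    [∀ j, CompleteSpace (G j)]
    (W V' : ι → Submodule ℂ E) [∀ j, CompleteSpace (W j)] [∀ j, CompleteSpace (V' j)]
    (w v : ι → ℝ) (hw : ∀ j, 0 < w j) (hv : ∀ j, 0 < v j)
    (Λ Γ : ∀ j, E →L[ℂ] G j)
    (D₁ D₂ : ℝ)
    (hΛ : ∀ f : E, Summable (fun j => (w j) ^ 2 * ‖Λ j (proj (W j) f)‖ ^ 2) ∧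
      ∑' j, (w j) ^ 2 * ‖Λ j (proj (W j) f)‖ ^ 2 ≤ D₁ * ‖f‖ ^ 2)
    (hΓ : ∀ f : E, Summable (fun j => (v j) ^ 2 * ‖Γ j (proj (V' j) f)‖ ^ 2) ∧
      ∑' j, (v j) ^ 2 * ‖Γ j (proj (V' j) f)‖ ^ 2 ≤ D₂ * ‖f‖ ^ 2)
    (S : E →L[ℂ] E)
    (hS : ∀ f : E, HasSum
      (fun j => (v j * w j) • proj (V' j)
        (ContinuousLinearMap.adjoint (Γ j) (Λ j (proj (W j) f)))) (S f))
    (M : ℝ) (hM : 0 < M) (hMS : ∀ f : E, M * ‖f‖ ≤ ‖S f‖) :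
    ∀ f : E,
      M ^ 2 / D₂ * ‖f‖ ^ 2 ≤ ∑' j, (w j) ^ 2 * ‖Λ j (proj (W j) f)‖ ^ 2 ∧
      ∑' j, (w j) ^ 2 * ‖Λ j (proj (W j) f)‖ ^ 2 ≤ D₁ * ‖f‖ ^ 2 := by
  intro f
  refine ⟨?_, (hΛ f).2⟩
  by_cases hf : f = 0
  · subst hf
    simp only [norm_zero]
    have : (0:ℝ) ≤ ∑' j, (w j) ^ 2 * ‖Λ j (proj (W j) 0)‖ ^ 2 :=
      tsum_nonneg fun j => mul_nonneg (sq_nonneg _) (sq_nonneg _)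
    nlinarith
  set g := S f with hgdef
  set A := ∑' j, (w j) ^ 2 * ‖Λ j (proj (W j) f)‖ ^ 2 with hA
  have hA0 : 0 ≤ A := tsum_nonneg fun j => mul_nonneg (sq_nonneg _) (sq_nonneg _)
  set a : ι → ℝ := fun j => v j * ‖Γ j (proj (V' j) g)‖ with ha
  set b : ι → ℝ := fun j => w j * ‖Λ j (proj (W j) f)‖ with hb
  have ha0 : ∀ j, 0 ≤ a j := fun j => mul_nonneg (hv j).le (norm_nonneg _)
  have hb0 : ∀ j, 0 ≤ b j := fun j => mul_nonneg (hw j).le (norm_nonneg _)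
  have ha2 : ∀ j, a j ^ 2 = (v j) ^ 2 * ‖Γ j (proj (V' j) g)‖ ^ 2 := fun j => mul_pow _ _ _
  have hb2 : ∀ j, b j ^ 2 = (w j) ^ 2 * ‖Λ j (proj (W j) f)‖ ^ 2 := fun j => mul_pow _ _ _
  have hsa2 : Summable (fun j => a j ^ 2) := by simpa only [ha2] using (hΓ g).1
  have hsb2 : Summable (fun j => b j ^ 2) := by simpa only [hb2] using (hΛ f).1
  -- summability of a*b
  have hsab : Summable (fun j => a j * b j) := by
    refine Summable.of_nonneg_of_le (fun j => mul_nonneg (ha0 j) (hb0 j))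
      (fun j => ?_) ((hsa2.add hsb2).div_const 2)
    nlinarith [sq_nonneg (a j - b j)]
  -- key inner product computation
  have key : ∀ j, (inner ℂ g ((v j * w j) • proj (V' j)
      ((ContinuousLinearMap.adjoint (Γ j)) (Λ j (proj (W j) f)))) : ℂ)
      = ((v j * w j : ℝ) : ℂ) * inner ℂ (Γ j (proj (V' j) g)) (Λ j (proj (W j) f)) := by
    intro j
    rw [← Complex.coe_smul, inner_smul_right]
    congr 1
    have h1 : (inner ℂ g (proj (V' j) ((ContinuousLinearMap.adjoint (Γ j))
        (Λ j (proj (W j) f)))) : ℂ)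
        = inner ℂ (proj (V' j) g) ((ContinuousLinearMap.adjoint (Γ j)) (Λ j (proj (W j) f))) := by
      simp only [_root_.proj, ContinuousLinearMap.comp_apply, Submodule.subtypeL_apply]
      exact (Submodule.inner_starProjection_left_eq_right (V' j) g _).symm
    rw [h1, ContinuousLinearMap.adjoint_inner_right]
  -- HasSum for the real parts
  have h1 : HasSum (fun j => (v j * w j) *
      Complex.re (inner ℂ (Γ j (proj (V' j) g)) (Λ j (proj (W j) f)) : ℂ)) (‖g‖ ^ 2) := by
    have h2 := (hS f).map (innerSL ℂ g) (innerSL ℂ g).continuous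
    have h3 := h2.map Complex.reCLM Complex.reCLM.continuous
    have h4 : Complex.reCLM ((innerSL ℂ g) g) = ‖g‖ ^ 2 := by
      simpa using inner_self_eq_norm_sq (𝕜 := ℂ) g
    rw [h4] at h3
    convert h3 using 2 with j
    simp only [Function.comp_apply, innerSL_apply_apply, key j]
    simp [Complex.mul_re]
  -- bound each term
  have hble : ∀ j, (v j * w j) *
      Complex.re (inner ℂ (Γ j (proj (V' j) g)) (Λ j (proj (W j) f)) : ℂ) ≤ a j * b j := by
    intro j
    have h5 := re_inner_le_norm (𝕜 := ℂ) (Γ j (proj (V' j) g)) (Λ j (proj (W j) f))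
    have hvw : (0:ℝ) ≤ v j * w j := mul_nonneg (hv j).le (hw j).le
    calc (v j * w j) * Complex.re (inner ℂ (Γ j (proj (V' j) g)) (Λ j (proj (W j) f)) : ℂ)
        ≤ (v j * w j) * (‖Γ j (proj (V' j) g)‖ * ‖Λ j (proj (W j) f)‖) :=
          mul_le_mul_of_nonneg_left h5 hvw
      _ = a j * b j := by simp only [ha, hb]; ring
  -- Cauchy-Schwarz for the series
  have habsum : ∑' j, a j * b j ≤ Real.sqrt (D₂ * ‖g‖ ^ 2) * Real.sqrt A := by
    refine Summable.tsum_le_of_sum_le hsab fun s => ?_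
    have hcs := Finset.sum_mul_sq_le_sq_mul_sq s a b
    have hnn : 0 ≤ ∑ j ∈ s, a j * b j :=
      Finset.sum_nonneg fun j _ => mul_nonneg (ha0 j) (hb0 j)
    have step1 : ∑ j ∈ s, a j * b j ≤
        Real.sqrt (∑ j ∈ s, a j ^ 2) * Real.sqrt (∑ j ∈ s, b j ^ 2) := by
      rw [← Real.sqrt_mul (Finset.sum_nonneg fun j _ => sq_nonneg _)]
      calc ∑ j ∈ s, a j * b j = Real.sqrt ((∑ j ∈ s, a j * b j) ^ 2) :=
            (Real.sqrt_sq hnn).symm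
        _ ≤ _ := Real.sqrt_le_sqrt hcs
    refine step1.trans (mul_le_mul (Real.sqrt_le_sqrt ?_) (Real.sqrt_le_sqrt ?_)
      (Real.sqrt_nonneg _) (Real.sqrt_nonneg _))
    · calc ∑ j ∈ s, a j ^ 2 ≤ ∑' j, a j ^ 2 :=
          Summable.sum_le_tsum s (fun j _ => sq_nonneg _) hsa2
        _ = ∑' j, (v j) ^ 2 * ‖Γ j (proj (V' j) g)‖ ^ 2 := by simp_rw [ha2]
        _ ≤ D₂ * ‖g‖ ^ 2 := (hΓ g).2
    · calc ∑ j ∈ s, b j ^ 2 ≤ ∑' j, b j ^ 2 :=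
          Summable.sum_le_tsum s (fun j _ => sq_nonneg _) hsb2
        _ = A := by simp_rw [hb2]; rfl
  have hgsq : ‖g‖ ^ 2 ≤ Real.sqrt (D₂ * ‖g‖ ^ 2) * Real.sqrt A := by
    calc ‖g‖ ^ 2 = ∑' j, (v j * w j) *
          Complex.re (inner ℂ (Γ j (proj (V' j) g)) (Λ j (proj (W j) f)) : ℂ) := h1.tsum_eq.symm
      _ ≤ ∑' j, a j * b j := Summable.tsum_le_tsum hble h1.summable hsab
      _ ≤ _ := habsum
  have hgpos : 0 < ‖g‖ :=
    lt_of_lt_of_le (mul_pos hM (norm_pos_iff.mpr hf)) (hMS f)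
  -- D₂ > 0
  have hD2 : 0 < D₂ := by
    by_contra hD
    push_neg at hD
    have hsqrt0 : Real.sqrt (D₂ * ‖g‖ ^ 2) = 0 := by
      apply Real.sqrt_eq_zero_of_nonpos
      exact mul_nonpos_of_nonpos_of_nonneg hD (sq_nonneg _)
    rw [hsqrt0, zero_mul] at hgsq
    nlinarith
  have hD2g : 0 ≤ D₂ * ‖g‖ ^ 2 := mul_nonneg hD2.le (sq_nonneg _)
  -- square the inequality
  have hsq : (‖g‖ ^ 2) ^ 2 ≤ (D₂ * ‖g‖ ^ 2) * A := by
    have h6 : (Real.sqrt (D₂ * ‖g‖ ^ 2) * Real.sqrt A) ^ 2 = (D₂ * ‖g‖ ^ 2) * A := by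
      rw [mul_pow, Real.sq_sqrt hD2g, Real.sq_sqrt hA0]
    nlinarith [Real.sqrt_nonneg (D₂ * ‖g‖ ^ 2), Real.sqrt_nonneg A, sq_nonneg (‖g‖^2)]
  have hgA : ‖g‖ ^ 2 ≤ D₂ * A := by nlinarith [pow_pos hgpos 2]
  have hMf : M ^ 2 * ‖f‖ ^ 2 ≤ ‖g‖ ^ 2 := by
    have := hMS f
    nlinarith [norm_nonneg f, mul_nonneg hM.le (norm_nonneg f)]
  rw [div_mul_eq_mul_div, div_le_iff₀ hD2]
  nlinarith
end

section
/- Let Λ, Γ be g-fusion Bessel sequences in H with bounds D₁, D₂ and frame operator S_{ΓΛ}. If there exist λ₁ < 1 and λ₂ > −1 such that ‖f − S_{ΓΛ} f‖ ≤ λ₁‖f‖ + λ₂‖S_{ΓΛ} f‖ for all f ∈ H, then Λ is a g-fusion frame for H with lower bound (1/D₂)·((1−λ₁)/(1+λ₂))² and upper bound D₁. -/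
open ContinuousLinearMap
open scoped ComplexInnerProductSpace

lemma amgm_param (a b t : ℝ) (ht : 0 < t) : a * b ≤ (t * a ^ 2 + t⁻¹ * b ^ 2) / 2 := by
  have h1 : t * t⁻¹ = 1 := mul_inv_cancel₀ ht.ne'
  have h2 : 0 < t⁻¹ := inv_pos.2 ht
  nlinarith [sq_nonneg (t * a - b), mul_pos ht h2, sq_nonneg (a - t⁻¹ * b)]

lemma inner_term_eq {E : Type*} [NormedAddCommGroup E] [InnerProductSpace ℂ E] [CompleteSpace E]
    {F : Type*} [NormedAddCommGroup F] [InnerProductSpace ℂ F] [CompleteSpace F]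
    (V : Submodule ℂ E) [CompleteSpace V] (A : E →L[ℂ] F) (g : E) (x : F) (r : ℝ) :
    ⟪g, r • proj V ((ContinuousLinearMap.adjoint A) x)⟫ =
      ((r : ℂ)) * ⟪A (proj V g), x⟫ := by
  rw [RCLike.real_smul_eq_coe_smul (K := ℂ), inner_smul_right]
  congr 1
  simp only [_root_.proj, ContinuousLinearMap.comp_apply, Submodule.subtypeL_apply]
  rw [← Submodule.starProjection_apply, ← Submodule.starProjection_apply,
    ← Submodule.inner_starProjection_left_eq_right, adjoint_inner_right]

/-- if ‖f − S_{ΓΛ} f‖ ≤ λ₁‖f‖ + λ₂‖S_{ΓΛ} f‖ with λ₁ < 1, λ₂ > −1, then Λ is a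
g-fusion frame with bounds (1/D₂)((1−λ₁)/(1+λ₂))² and D₁. -/
theorem stmt12
    {ι E : Type*} [NormedAddCommGroup E] [InnerProductSpace ℂ E] [CompleteSpace E]
    {G : ι → Type*} [∀ j, NormedAddCommGroup (G j)] [∀ j, InnerProductSpace ℂ (G j)]
    [∀ j, CompleteSpace (G j)]
    (W V' : ι → Submodule ℂ E) [∀ j, CompleteSpace (W j)] [∀ j, CompleteSpace (V' j)]
    (w v : ι → ℝ) (hw : ∀ j, 0 < w j) (hv : ∀ j, 0 < v j)
    (Λ Γ : ∀ j, E →L[ℂ] G j)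
    (D₁ D₂ : ℝ)
    (hΛ : ∀ f : E, Summable (fun j => (w j) ^ 2 * ‖Λ j (proj (W j) f)‖ ^ 2) ∧
      ∑' j, (w j) ^ 2 * ‖Λ j (proj (W j) f)‖ ^ 2 ≤ D₁ * ‖f‖ ^ 2)
    (hΓ : ∀ f : E, Summable (fun j => (v j) ^ 2 * ‖Γ j (proj (V' j) f)‖ ^ 2) ∧
      ∑' j, (v j) ^ 2 * ‖Γ j (proj (V' j) f)‖ ^ 2 ≤ D₂ * ‖f‖ ^ 2)
    (S : E →L[ℂ] E)
    (hS : ∀ f : E, HasSum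
      (fun j => (v j * w j) • proj (V' j)
        (ContinuousLinearMap.adjoint (Γ j) (Λ j (proj (W j) f)))) (S f))
    (lam₁ lam₂ : ℝ) (h1 : lam₁ < 1) (h2 : -1 < lam₂)
    (hper : ∀ f : E, ‖f - S f‖ ≤ lam₁ * ‖f‖ + lam₂ * ‖S f‖) :
    ∀ f : E,
      1 / D₂ * ((1 - lam₁) / (1 + lam₂)) ^ 2 * ‖f‖ ^ 2 ≤
        ∑' j, (w j) ^ 2 * ‖Λ j (proj (W j) f)‖ ^ 2 ∧
      ∑' j, (w j) ^ 2 * ‖Λ j (proj (W j) f)‖ ^ 2 ≤ D₁ * ‖f‖ ^ 2 := by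
  intro f
  refine ⟨?_, (hΛ f).2⟩
  set α := ∑' j, (w j) ^ 2 * ‖Λ j (proj (W j) f)‖ ^ 2 with hαdef
  have hα0 : 0 ≤ α := tsum_nonneg (fun j => by positivity)
  by_cases hD : 0 < D₂
  swap
  · -- D₂ ≤ 0 : 1/D₂ ≤ 0, so LHS ≤ 0 ≤ α
    push_neg at hD
    have hd : 1 / D₂ ≤ 0 := one_div_nonpos.2 hD
    have hX : 0 ≤ ((1 - lam₁) / (1 + lam₂)) ^ 2 * ‖f‖ ^ 2 := by positivity
    calc 1 / D₂ * ((1 - lam₁) / (1 + lam₂)) ^ 2 * ‖f‖ ^ 2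
        = 1 / D₂ * (((1 - lam₁) / (1 + lam₂)) ^ 2 * ‖f‖ ^ 2) := by ring
      _ ≤ 0 := mul_nonpos_of_nonpos_of_nonneg hd hX
      _ ≤ α := hα0
  -- main case
  set β := ‖S f‖ with hβdef
  have hβ0 : 0 ≤ β := norm_nonneg _
  -- Step A
  have hscal : (1 - lam₁) * ‖f‖ ≤ (1 + lam₂) * β := by
    have hp := hper f
    have h' : ‖f‖ - β ≤ ‖f - S f‖ := by
      have := norm_sub_norm_le f (S f); linarith
    linarith
  -- Step B : β^2 ≤ D₂ * α
  have hB : β ^ 2 ≤ D₂ * α := by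
    set c : ι → ℂ := fun j => ⟪S f, (v j * w j) • proj (V' j)
        ((ContinuousLinearMap.adjoint (Γ j)) (Λ j (proj (W j) f)))⟫ with hcdef
    have hs2 : HasSum c ⟪S f, S f⟫ := (hS f).mapL (innerSL ℂ (S f))
    have hnorm : ∀ j, ‖c j‖ ≤ (v j * ‖Γ j (proj (V' j) (S f))‖) *
        (w j * ‖Λ j (proj (W j) f)‖) := by
      intro j
      rw [hcdef]
      simp only
      rw [inner_term_eq]
      rw [norm_mul]
      have hle := norm_inner_le_norm (𝕜 := ℂ) (Γ j (proj (V' j) (S f))) (Λ j (proj (W j) f))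
      have hvw : ‖((v j * w j : ℝ) : ℂ)‖ = v j * w j := by
        rw [Complex.norm_real, Real.norm_eq_abs,
          abs_of_nonneg (mul_nonneg (hv j).le (hw j).le)]
      rw [hvw]
      calc (v j * w j) * ‖⟪Γ j (proj (V' j) (S f)), Λ j (proj (W j) f)⟫‖
          ≤ (v j * w j) * (‖Γ j (proj (V' j) (S f))‖ * ‖Λ j (proj (W j) f)‖) := by
            exact mul_le_mul_of_nonneg_left hle (mul_nonneg (hv j).le (hw j).le)
        _ = (v j * ‖Γ j (proj (V' j) (S f))‖) * (w j * ‖Λ j (proj (W j) f)‖) := by ring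
    have hsumΓ := (hΓ (S f)).1
    have hsumΛ := (hΛ f).1
    have hcs : Summable (fun j => ‖c j‖) := by
      apply Summable.of_nonneg_of_le (fun j => norm_nonneg _)
        (fun j => le_trans (hnorm j) ?_) ((hsumΓ.add hsumΛ).div_const 2)
      have := amgm_param (v j * ‖Γ j (proj (V' j) (S f))‖) (w j * ‖Λ j (proj (W j) f)‖) 1
        one_pos
      simpa [mul_pow] using this
    have hβsq : β ^ 2 = ‖⟪S f, S f⟫‖ := by
      rw [inner_self_eq_norm_sq_to_K, norm_pow, RCLike.norm_ofReal, abs_norm]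
    have hkey : ∀ t : ℝ, 0 < t → β ^ 2 ≤ (t * (D₂ * β ^ 2) + t⁻¹ * α) / 2 := by
      intro t ht
      have hmajsum : Summable (fun j => (t * ((v j) ^ 2 * ‖Γ j (proj (V' j) (S f))‖ ^ 2)
          + t⁻¹ * ((w j) ^ 2 * ‖Λ j (proj (W j) f)‖ ^ 2)) / 2) :=
        ((hsumΓ.mul_left t).add (hsumΛ.mul_left t⁻¹)).div_const 2
      have step1 : β ^ 2 ≤ ∑' j, ‖c j‖ := by
        rw [hβsq, ← hs2.tsum_eq]
        exact norm_tsum_le_tsum_norm hcs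
      have step2 : ∑' j, ‖c j‖ ≤ ∑' j, (t * ((v j) ^ 2 * ‖Γ j (proj (V' j) (S f))‖ ^ 2)
          + t⁻¹ * ((w j) ^ 2 * ‖Λ j (proj (W j) f)‖ ^ 2)) / 2 := by
        apply Summable.tsum_le_tsum _ hcs hmajsum
        intro j
        refine le_trans (hnorm j) ?_
        have := amgm_param (v j * ‖Γ j (proj (V' j) (S f))‖) (w j * ‖Λ j (proj (W j) f)‖) t ht
        calc (v j * ‖Γ j (proj (V' j) (S f))‖) * (w j * ‖Λ j (proj (W j) f)‖)
            ≤ (t * (v j * ‖Γ j (proj (V' j) (S f))‖) ^ 2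
              + t⁻¹ * (w j * ‖Λ j (proj (W j) f)‖) ^ 2) / 2 := this
          _ = (t * ((v j) ^ 2 * ‖Γ j (proj (V' j) (S f))‖ ^ 2)
              + t⁻¹ * ((w j) ^ 2 * ‖Λ j (proj (W j) f)‖ ^ 2)) / 2 := by ring
      have step3 : ∑' j, (t * ((v j) ^ 2 * ‖Γ j (proj (V' j) (S f))‖ ^ 2)
          + t⁻¹ * ((w j) ^ 2 * ‖Λ j (proj (W j) f)‖ ^ 2)) / 2
          = (t * (∑' j, (v j) ^ 2 * ‖Γ j (proj (V' j) (S f))‖ ^ 2) + t⁻¹ * α) / 2 := by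
        rw [tsum_div_const, Summable.tsum_add (hsumΓ.mul_left t) (hsumΛ.mul_left t⁻¹),
          tsum_mul_left, tsum_mul_left]
      have hΓb := (hΓ (S f)).2
      have : ∑' j, ‖c j‖ ≤ (t * (D₂ * β ^ 2) + t⁻¹ * α) / 2 := by
        rw [hβdef]
        refine le_trans step2 ?_
        rw [step3]
        have h4 : t * (∑' j, (v j) ^ 2 * ‖Γ j (proj (V' j) (S f))‖ ^ 2)
            ≤ t * (D₂ * ‖S f‖ ^ 2) := mul_le_mul_of_nonneg_left hΓb ht.le
        have h5 : 0 ≤ t⁻¹ * α := by positivity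
        linarith
      linarith [step1]
    -- conclude β^2 ≤ D₂ * α
    rcases eq_or_lt_of_le hβ0 with hβz | hβpos
    · rw [← hβz]
      nlinarith [mul_nonneg hD.le hα0]
    rcases eq_or_lt_of_le hα0 with hαz | hαpos
    · exfalso
      have hk := hkey D₂⁻¹ (inv_pos.2 hD)
      rw [← hαz] at hk
      have hinv : D₂⁻¹ * (D₂ * β ^ 2) = β ^ 2 := by field_simp
      rw [hinv] at hk
      nlinarith [pow_pos hβpos 2]
    · set t := Real.sqrt (α / (D₂ * β ^ 2)) with htdef
      have ht : 0 < t := Real.sqrt_pos.2 (by positivity)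
      have ht2 : t ^ 2 = α / (D₂ * β ^ 2) := Real.sq_sqrt (by positivity)
      have hts : t ^ 2 * (D₂ * β ^ 2) = α := by
        rw [ht2]; field_simp
      have hk := hkey t ht
      have hinv : t⁻¹ * α = t * (D₂ * β ^ 2) := by
        rw [← hts]; field_simp
      rw [hinv] at hk
      have hk' : β ^ 2 ≤ t * (D₂ * β ^ 2) := by linarith
      have hk'' : t * β ^ 2 ≤ α := by
        have := mul_le_mul_of_nonneg_left hk' ht.le
        nlinarith [hts]
      nlinarith [pow_pos hβpos 2, mul_pos hD (pow_pos hβpos 2)]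
  -- Step C : combine
  have hq0 : 0 ≤ (1 - lam₁) / (1 + lam₂) := by
    apply div_nonneg <;> linarith
  have hsq : ((1 - lam₁) / (1 + lam₂)) ^ 2 * ‖f‖ ^ 2 ≤ β ^ 2 := by
    have hb : (1 - lam₁) / (1 + lam₂) * ‖f‖ ≤ β := by
      rw [div_mul_eq_mul_div, div_le_iff₀ (by linarith : (0:ℝ) < 1 + lam₂)]
      nlinarith
    have h0 : 0 ≤ (1 - lam₁) / (1 + lam₂) * ‖f‖ := by positivity
    nlinarith
  rw [show 1 / D₂ * ((1 - lam₁) / (1 + lam₂)) ^ 2 * ‖f‖ ^ 2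
      = (((1 - lam₁) / (1 + lam₂)) ^ 2 * ‖f‖ ^ 2) / D₂ by ring, div_le_iff₀ hD]
  nlinarith
end

section
/- Let Λ, Γ be g-fusion Bessel sequences in H with bounds D₁, D₂ and frame operator S_{ΓΛ}. If there exists K ∈ B(H) such that f = Σ_{j∈J} v_j w_j K P_{V_j} Γ_j* Λ_j P_{W_j} f for all f ∈ H, then Λ is a g-fusion frame for H with lower bound 1/(D₂‖K‖²) and upper bound D₁. -/
open ContinuousLinearMap

lemma proj_inner_symm {E : Type*} [NormedAddCommGroup E] [InnerProductSpace ℂ E]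
    (W : Submodule ℂ E) [CompleteSpace W] (f g : E) :
    @inner ℂ _ _ (_root_.proj W f) g = @inner ℂ _ _ f (_root_.proj W g) := by
  exact W.inner_starProjection_left_eq_right f g

lemma tsum_cs {ι : Type*} (a b : ι → ℝ) (ha0 : ∀ j, 0 ≤ a j) (hb0 : ∀ j, 0 ≤ b j)
    (ha : Summable (fun j => a j ^ 2)) (hb : Summable (fun j => b j ^ 2)) :
    Summable (fun j => a j * b j) ∧
    ∑' j, a j * b j ≤ Real.sqrt (∑' j, a j ^ 2) * Real.sqrt (∑' j, b j ^ 2) := by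
  have hsum : Summable (fun j => a j * b j) := by
    apply Summable.of_nonneg_of_le (fun j => mul_nonneg (ha0 j) (hb0 j))
      (fun j => ?_) ((ha.add hb).div_const 2)
    show a j * b j ≤ (a j ^ 2 + b j ^ 2) / 2
    nlinarith [sq_nonneg (a j - b j)]
  refine ⟨hsum, Summable.tsum_le_of_sum_le hsum fun s => ?_⟩
  have h1 : (∑ j ∈ s, a j * b j) ^ 2 ≤ (∑ j ∈ s, a j ^ 2) * ∑ j ∈ s, b j ^ 2 :=
    Finset.sum_mul_sq_le_sq_mul_sq s a b
  have h2 : (∑ j ∈ s, a j ^ 2) ≤ ∑' j, a j ^ 2 := Summable.sum_le_tsum s (fun j _ => sq_nonneg _) ha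
  have h3 : (∑ j ∈ s, b j ^ 2) ≤ ∑' j, b j ^ 2 := Summable.sum_le_tsum s (fun j _ => sq_nonneg _) hb
  have hnn : 0 ≤ ∑ j ∈ s, a j * b j := Finset.sum_nonneg fun j _ => mul_nonneg (ha0 j) (hb0 j)
  rw [← Real.sqrt_mul (tsum_nonneg fun j => sq_nonneg _)]
  exact (Real.le_sqrt hnn (mul_nonneg (tsum_nonneg fun j => sq_nonneg _)
      (tsum_nonneg fun j => sq_nonneg _))).mpr
    (h1.trans (mul_le_mul h2 h3 (Finset.sum_nonneg fun j _ => sq_nonneg _)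
      (tsum_nonneg fun j => sq_nonneg _)))

set_option maxHeartbeats 1000000

/-- if f = Σ_j v_j w_j K P_{V_j} Γ_j* Λ_j P_{W_j} f for all f, then Λ is a
g-fusion frame with bounds 1/(D₂‖K‖²) and D₁. -/
theorem stmt19
    {ι E : Type*} [NormedAddCommGroup E] [InnerProductSpace ℂ E] [CompleteSpace E]
    {G : ι → Type*} [∀ j, NormedAddCommGroup (G j)] [∀ j, InnerProductSpace ℂ (G j)]
    [∀ j, CompleteSpace (G j)]
    (W V' : ι → Submodule ℂ E) [∀ j, CompleteSpace (W j)] [∀ j, CompleteSpace (V' j)]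
    (w v : ι → ℝ) (hw : ∀ j, 0 < w j) (hv : ∀ j, 0 < v j)
    (Λ Γ : ∀ j, E →L[ℂ] G j)
    (D₁ D₂ : ℝ)
    (hΛ : ∀ f : E, Summable (fun j => (w j) ^ 2 * ‖Λ j (proj (W j) f)‖ ^ 2) ∧
      ∑' j, (w j) ^ 2 * ‖Λ j (proj (W j) f)‖ ^ 2 ≤ D₁ * ‖f‖ ^ 2)
    (hΓ : ∀ f : E, Summable (fun j => (v j) ^ 2 * ‖Γ j (proj (V' j) f)‖ ^ 2) ∧
      ∑' j, (v j) ^ 2 * ‖Γ j (proj (V' j) f)‖ ^ 2 ≤ D₂ * ‖f‖ ^ 2)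
    (S : E →L[ℂ] E)
    (hS : ∀ f : E, HasSum
      (fun j => (v j * w j) • proj (V' j)
        (ContinuousLinearMap.adjoint (Γ j) (Λ j (proj (W j) f)))) (S f))
    (K : E →L[ℂ] E)
    (hK : ∀ f : E, HasSum
      (fun j => (v j * w j) • K (proj (V' j)
        (ContinuousLinearMap.adjoint (Γ j) (Λ j (proj (W j) f))))) f) :
    ∀ f : E,
      1 / (D₂ * ‖K‖ ^ 2) * ‖f‖ ^ 2 ≤ ∑' j, (w j) ^ 2 * ‖Λ j (proj (W j) f)‖ ^ 2 ∧
      ∑' j, (w j) ^ 2 * ‖Λ j (proj (W j) f)‖ ^ 2 ≤ D₁ * ‖f‖ ^ 2 := by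
  intro f
  set A := ∑' j, (w j) ^ 2 * ‖Λ j (proj (W j) f)‖ ^ 2 with hA
  have hAnn : 0 ≤ A := tsum_nonneg fun j => by positivity
  refine ⟨?_, (hΛ f).2⟩
  by_cases hf0 : f = 0
  · simpa [hf0] using hAnn
  -- abbreviations
  set g := ContinuousLinearMap.adjoint K f with hg
  set a : ι → ℝ := fun j => w j * ‖Λ j (proj (W j) f)‖ with ha
  set b : ι → ℝ := fun j => v j * ‖Γ j (proj (V' j) g)‖ with hb
  have ha0 : ∀ j, 0 ≤ a j := fun j => mul_nonneg (hw j).le (norm_nonneg _)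
  have hb0 : ∀ j, 0 ≤ b j := fun j => mul_nonneg (hv j).le (norm_nonneg _)
  have haeq : ∀ j, a j ^ 2 = (w j) ^ 2 * ‖Λ j (proj (W j) f)‖ ^ 2 := fun j => mul_pow _ _ _
  have hbeq : ∀ j, b j ^ 2 = (v j) ^ 2 * ‖Γ j (proj (V' j) g)‖ ^ 2 := fun j => mul_pow _ _ _
  have haS : Summable (fun j => a j ^ 2) := by
    simpa only [haeq] using (hΛ f).1
  have hbS : Summable (fun j => b j ^ 2) := by
    simpa only [hbeq] using (hΓ g).1
  obtain ⟨habS, habCS⟩ := tsum_cs a b ha0 hb0 haS hbS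
  -- key identity for each term
  have hkey : ∀ j, @inner ℂ _ _ f ((v j * w j) • K (proj (V' j)
      (ContinuousLinearMap.adjoint (Γ j) (Λ j (proj (W j) f)))))
      = ((v j * w j : ℝ) : ℂ) * @inner ℂ _ _ (Γ j (proj (V' j) g)) (Λ j (proj (W j) f)) := by
    intro j
    rw [← Complex.coe_smul, inner_smul_right]
    congr 1
    rw [← adjoint_inner_left K, ← proj_inner_symm, adjoint_inner_right]
  -- the sum of inner products
  have hsum : HasSum (fun j => @inner ℂ _ _ f ((v j * w j) • K (proj (V' j)
      (ContinuousLinearMap.adjoint (Γ j) (Λ j (proj (W j) f)))))) (@inner ℂ _ _ f f) :=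
    (hK f).mapL (innerSL ℂ f)
  have hnormterm : ∀ j, ‖@inner ℂ _ _ f ((v j * w j) • K (proj (V' j)
      (ContinuousLinearMap.adjoint (Γ j) (Λ j (proj (W j) f)))))‖ ≤ b j * a j := by
    intro j
    rw [hkey j]
    calc ‖((v j * w j : ℝ) : ℂ) * @inner ℂ _ _ (Γ j (proj (V' j) g)) (Λ j (proj (W j) f))‖
        = (v j * w j) * ‖@inner ℂ _ _ (Γ j (proj (V' j) g)) (Λ j (proj (W j) f))‖ := by
          rw [norm_mul, Complex.norm_real, Real.norm_of_nonneg
            (mul_nonneg (hv j).le (hw j).le)]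
      _ ≤ (v j * w j) * (‖Γ j (proj (V' j) g)‖ * ‖Λ j (proj (W j) f)‖) := by
          exact mul_le_mul_of_nonneg_left (norm_inner_le_norm _ _)
            (mul_nonneg (hv j).le (hw j).le)
      _ = b j * a j := by simp only [ha, hb]; ring
  -- ‖f‖² ≤ ∑' b*a
  have hba : Summable (fun j => b j * a j) := by
    simpa [mul_comm] using habS
  have hnormS : Summable (fun j => ‖@inner ℂ _ _ f ((v j * w j) • K (proj (V' j)
      (ContinuousLinearMap.adjoint (Γ j) (Λ j (proj (W j) f)))))‖) :=
    Summable.of_nonneg_of_le (fun j => norm_nonneg _) hnormterm hba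
  have h1 : ‖f‖ ^ 2 ≤ ∑' j, a j * b j := by
    have e1 : (‖f‖ : ℂ) ^ 2 = @inner ℂ _ _ f f := (inner_self_eq_norm_sq_to_K f).symm
    have : ‖(@inner ℂ _ _ f f)‖ ≤ ∑' j, ‖@inner ℂ _ _ f ((v j * w j) • K (proj (V' j)
        (ContinuousLinearMap.adjoint (Γ j) (Λ j (proj (W j) f)))))‖ := by
      rw [← hsum.tsum_eq]
      exact norm_tsum_le_tsum_norm hnormS
    have e2 : ‖(@inner ℂ _ _ f f)‖ = ‖f‖ ^ 2 := by
      rw [← e1]; simp [Complex.norm_real]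
    have h3 : (∑' j, ‖@inner ℂ _ _ f ((v j * w j) • K (proj (V' j)
        (ContinuousLinearMap.adjoint (Γ j) (Λ j (proj (W j) f)))))‖) ≤ ∑' j, b j * a j :=
      Summable.tsum_le_tsum hnormterm hnormS hba
    have : ‖f‖ ^ 2 ≤ ∑' j, b j * a j := by rw [← e2]; exact this.trans h3
    simpa [mul_comm] using this
  -- bound ∑' b² by D₂‖K‖²‖f‖²
  set C := D₂ * ‖K‖ ^ 2 * ‖f‖ ^ 2 with hC
  have hBle : ∑' j, b j ^ 2 ≤ C := by
    have h4 : ∑' j, b j ^ 2 ≤ D₂ * ‖g‖ ^ 2 := by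
      simpa only [hbeq] using (hΓ g).2
    have h5 : ‖g‖ ≤ ‖K‖ * ‖f‖ := by
      calc ‖g‖ ≤ ‖ContinuousLinearMap.adjoint K‖ * ‖f‖ := le_opNorm _ _
        _ = ‖K‖ * ‖f‖ := by rw [LinearIsometryEquiv.norm_map adjoint K]
    have hD2 : 0 ≤ D₂ := by
      by_contra hD2
      push_neg at hD2
      have hf2 : (0:ℝ) < ‖f‖ ^ 2 := pow_pos (norm_pos_iff.mpr hf0) 2
      have := (hΓ f).2
      have hpos : 0 ≤ ∑' j, (v j) ^ 2 * ‖Γ j (proj (V' j) f)‖ ^ 2 :=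
        tsum_nonneg fun j => by positivity
      nlinarith
    calc ∑' j, b j ^ 2 ≤ D₂ * ‖g‖ ^ 2 := h4
      _ ≤ D₂ * (‖K‖ * ‖f‖) ^ 2 := by
          exact mul_le_mul_of_nonneg_left (pow_le_pow_left₀ (norm_nonneg g) h5 2) hD2
      _ = C := by rw [hC]; ring
  have hBnn : 0 ≤ ∑' j, b j ^ 2 := tsum_nonneg fun j => sq_nonneg _
  have hCnn : 0 ≤ C := hBnn.trans hBle
  -- combine: ‖f‖² ≤ sqrt A * sqrt C
  have h6 : ‖f‖ ^ 2 ≤ Real.sqrt A * Real.sqrt C := by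
    have : Real.sqrt (∑' j, b j ^ 2) ≤ Real.sqrt C := Real.sqrt_le_sqrt hBle
    have hAeq : (∑' j, a j ^ 2) = A := by
      rw [hA]; exact tsum_congr fun j => haeq j
    calc ‖f‖ ^ 2 ≤ ∑' j, a j * b j := h1
      _ ≤ Real.sqrt (∑' j, a j ^ 2) * Real.sqrt (∑' j, b j ^ 2) := habCS
      _ ≤ Real.sqrt A * Real.sqrt C := by
          rw [hAeq]
          exact mul_le_mul_of_nonneg_left this (Real.sqrt_nonneg _)
  -- square and conclude
  have h7 : (‖f‖ ^ 2) ^ 2 ≤ A * C := by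
    have := mul_self_le_mul_self (by positivity) h6
    calc (‖f‖ ^ 2) ^ 2 = ‖f‖ ^ 2 * ‖f‖ ^ 2 := by ring
      _ ≤ (Real.sqrt A * Real.sqrt C) * (Real.sqrt A * Real.sqrt C) := this
      _ = (Real.sqrt A * Real.sqrt A) * (Real.sqrt C * Real.sqrt C) := by ring
      _ = A * C := by rw [Real.mul_self_sqrt hAnn, Real.mul_self_sqrt hCnn]
  have hfpos : 0 < ‖f‖ ^ 2 := pow_pos (norm_pos_iff.mpr hf0) 2
  have hDK : 0 < D₂ * ‖K‖ ^ 2 := by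
    by_contra hd
    push_neg at hd
    have : C ≤ 0 := by rw [hC]; nlinarith
    nlinarith
  rw [div_mul_eq_mul_div, one_mul, div_le_iff₀ hDK]
  -- ‖f‖² ≤ A * (D₂‖K‖²); from ‖f‖⁴ ≤ A * C = A * D₂‖K‖² ‖f‖²
  nlinarith [h7, hfpos, hAnn]
end
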